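/- Let F : ℝ^d → ℝ^d be a C¹ map that is uniformly hyperbolic on a compact set Λ ⊆ ℝ^d with F(Λ) = Λ, and assume the derivative DF is Lipschitz on a neighborhood of Λ. Then F has the shadowing property for C¹-close maps: for every δ > 0 there exists ε > 0 such that for every C¹ map G : ℝ^d → ℝ^d with sup_{x} (‖G(x) − F(x)‖ + ‖DG(x) − DF(x)‖) ≤ ε, there exists a map τ : Λ → ℝ^d with ‖τ(x) − x‖ ≤ δ for all x ∈ Λ such that ‖G^t(τ(x)) − F^t(x)‖ ≤ δ for all x ∈ Λ and all t ∈ ℕ. -/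

import Mathlib

open Function
open Metric


open Classical in
noncomputable def invOn {α β : Type*} [Zero α] (T : α → β) (S : Set α) (v : β) : α :=
  if h : ∃ u ∈ S, T u = v then h.choose else 0

lemma invOn_spec {α β : Type*} [Zero α] {T : α → β} {S : Set α} {v : β}
    (h : ∃ u ∈ S, T u = v) : invOn T S v ∈ S ∧ T (invOn T S v) = v := by
  classical
  rw [invOn]
  rw [dif_pos h]
  exact ⟨h.choose_spec.1, h.choose_spec.2⟩

lemma invOn_eq {α β : Type*} [Zero α] {T : α → β} {S : Set α} {V : Set β}
    (hT : Set.BijOn T S V) {u : α} {v : β} (hu : u ∈ S) (huv : T u = v) :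
    invOn T S v = u := by
  have h : ∃ u ∈ S, T u = v := ⟨u, hu, huv⟩
  obtain ⟨h1, h2⟩ := invOn_spec h
  exact hT.injOn h1 hu (h2.trans huv.symm)

lemma invOn_mem {α β : Type*} [Zero α] {T : α → β} {S : Set α} {V : Set β}
    (hT : Set.BijOn T S V) {v : β} (hv : v ∈ V) : invOn T S v ∈ S :=
  (invOn_spec (hT.surjOn hv)).1

lemma invOn_apply {α β : Type*} [Zero α] {T : α → β} {S : Set α} {V : Set β}
    (hT : Set.BijOn T S V) {v : β} (hv : v ∈ V) : T (invOn T S v) = v :=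
  (invOn_spec (hT.surjOn hv)).2

open Classical in
noncomputable def Pst {E : Type*} [AddCommGroup E] [Module ℝ E]
    (p q : Submodule ℝ E) (v : E) : E :=
  if h : IsCompl p q then (p.linearProjOfIsCompl q h v : E) else 0

lemma Pst_mem {E : Type*} [AddCommGroup E] [Module ℝ E] {p q : Submodule ℝ E}
    (h : IsCompl p q) (v : E) : Pst p q v ∈ p := by
  rw [Pst, dif_pos h]; exact (p.linearProjOfIsCompl q h v).2

lemma sub_Pst_mem {E : Type*} [AddCommGroup E] [Module ℝ E] {p q : Submodule ℝ E}
    (h : IsCompl p q) (v : E) : v - Pst p q v ∈ q := by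
  rw [Pst, dif_pos h]
  have h1 := Submodule.projection_add_projection_eq_self h v
  have h2 : v - (p.linearProjOfIsCompl q h v : E) = ((q.linearProjOfIsCompl p h.symm) v : E) :=
    sub_eq_of_eq_add' h1.symm
  rw [h2]; exact ((q.linearProjOfIsCompl p h.symm) v).2

lemma Pst_sub {E : Type*} [AddCommGroup E] [Module ℝ E] {p q : Submodule ℝ E}
    (h : IsCompl p q) (a b : E) : Pst p q (a - b) = Pst p q a - Pst p q b := by
  simp only [Pst, dif_pos h, ← Submodule.coe_sub, map_sub]

lemma Pst_zero {E : Type*} [AddCommGroup E] [Module ℝ E] (p q : Submodule ℝ E) :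
    Pst p q 0 = 0 := by
  by_cases h : IsCompl p q
  · simp [Pst, dif_pos h]
  · simp [Pst, dif_neg h]

section Key

variable {d : ℕ}

local notation "E" => EuclideanSpace ℝ (Fin d)

set_option maxHeartbeats 1000000 in
theorem key_shadow
    (F G : E → E) (Λ : Set E)
    (hFΛ : F '' Λ = Λ)
    (hF : ContDiff ℝ 1 F) (hG : ContDiff ℝ 1 G)
    (C lam : ℝ) (Es Eu : E → Submodule ℝ E)
    (hC : 1 ≤ C) (hlam0 : 0 < lam) (hlam1 : lam < 1)
    (hcompl : ∀ x ∈ Λ, IsCompl (Es x) (Eu x))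
    (hbij : ∀ x ∈ Λ, Set.BijOn (fderiv ℝ F x) ((Eu x : Set E)) ((Eu (F x) : Set E)))
    (hproj : ∀ x ∈ Λ, ∀ vs ∈ Es x, ∀ vu ∈ Eu x, ‖vs‖ ≤ C * ‖vs + vu‖)
    (hS : ∀ x ∈ Λ, ∀ t : ℕ, ∀ v ∈ Es x, ‖fderiv ℝ (F^[t]) x v‖ ≤ C * lam ^ t * ‖v‖)
    (hU : ∀ x ∈ Λ, ∀ t : ℕ, ∀ v ∈ Eu x, C⁻¹ * (lam ^ t)⁻¹ * ‖v‖ ≤ ‖fderiv ℝ (F^[t]) x v‖)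
    (K : NNReal) (U : Set E) (hlipF : LipschitzOnWith K (fderiv ℝ F) U)
    (r : ℝ) (hr : 0 < r) (hballU : ∀ m ∈ Λ, closedBall m r ⊆ U)
    (ε δ' : ℝ) (hε : 0 < ε) (hδ'0 : 0 < δ') (hδr : δ' ≤ r)
    (K0 : ℝ) (hK0 : K0 = 2 * C * (C + 1) / (1 - lam))
    (hcontr : K0 * (ε + K * δ') ≤ 1 / 2)
    (hKeps : K0 * ε ≤ δ' / 2)
    (hclose : ∀ z, ‖G z - F z‖ + ‖fderiv ℝ G z - fderiv ℝ F z‖ ≤ ε)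
    (x : E) (hx : x ∈ Λ) :
    ∃ z : E, ‖z - x‖ ≤ δ' ∧ ∀ t : ℕ, ‖G^[t] z - F^[t] x‖ ≤ δ' := by
  classical
  have hC0 : (0:ℝ) < C := lt_of_lt_of_le one_pos hC
  have hFd : Differentiable ℝ F := hF.differentiable one_ne_zero
  have hGd : Differentiable ℝ G := hG.differentiable one_ne_zero
  have hFi : ∀ n : ℕ, Differentiable ℝ (F^[n]) := by
    intro n
    induction n with
    | zero => simpa using differentiable_id
    | succ n ih =>
      rw [Function.iterate_succ']
      exact hFd.comp ih
  obtain ⟨y, hy⟩ : ∃ y : ℕ → E, y = fun t => F^[t] x := ⟨_, rfl⟩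
  have hy0 : y 0 = x := by rw [hy]; simp
  have hyΛ : ∀ t, y t ∈ Λ := by
    intro t
    induction t with
    | zero => rw [hy0]; exact hx
    | succ t ih =>
      have : y (t+1) = F (y t) := by rw [hy]; exact Function.iterate_succ_apply' F t x
      rw [this, ← hFΛ]
      exact ⟨_, ih, rfl⟩
  have hysucc : ∀ t, y (t+1) = F (y t) := by
    intro t; rw [hy]; exact Function.iterate_succ_apply' F t x
  have hyadd : ∀ t k, F^[k] (y t) = y (t+k) := by
    intro t k
    rw [hy]
    simp only [← Function.iterate_add_apply]
    rw [Nat.add_comm t k]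
  obtain ⟨A, hA⟩ : ∃ A : ℕ → E →L[ℝ] E, A = fun t => fderiv ℝ F (y t) := ⟨_, rfl⟩
  obtain ⟨Dk, hDk⟩ : ∃ Dk : ℕ → ℕ → E →L[ℝ] E, Dk = fun t k => fderiv ℝ (F^[k]) (y t) := ⟨_, rfl⟩
  have hDk0 : ∀ t, Dk t 0 = ContinuousLinearMap.id ℝ E := by
    intro t; rw [hDk]; simp [fderiv_id]
  have chain1 : ∀ t k, Dk t (k+1) = (A (t+k)).comp (Dk t k) := by
    intro t k
    have h1 : F^[k+1] = F ∘ F^[k] := Function.iterate_succ' F k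
    rw [hDk, hA]
    simp only [h1]
    rw [fderiv_comp _ (hFd _) ((hFi k) _), hyadd]
  have chain2 : ∀ t k, Dk t (k+1) = (Dk (t+1) k).comp (A t) := by
    intro t k
    have h1 : F^[k+1] = F^[k] ∘ F := Function.iterate_succ F k
    rw [hDk, hA]
    simp only [h1]
    rw [fderiv_comp _ ((hFi k) _) (hFd _), ← hysucc]
  -- projections
  have hcompl' : ∀ t, IsCompl (Es (y t)) (Eu (y t)) := fun t => hcompl _ (hyΛ t)
  obtain ⟨Ps, hPs⟩ : ∃ Ps : ℕ → E → E, Ps = fun t v => Pst (Es (y t)) (Eu (y t)) v := ⟨_, rfl⟩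
  obtain ⟨Pu, hPu⟩ : ∃ Pu : ℕ → E → E, Pu = fun t v => v - Ps t v := ⟨_, rfl⟩
  have hPsmem : ∀ t v, Ps t v ∈ Es (y t) := by
    intro t v; rw [hPs]; exact Pst_mem (hcompl' t) v
  have hPumem : ∀ t v, Pu t v ∈ Eu (y t) := by
    intro t v; rw [hPu, hPs]; exact sub_Pst_mem (hcompl' t) v
  have hPssub : ∀ t a b, Ps t (a - b) = Ps t a - Ps t b := by
    intro t a b; rw [hPs]; exact Pst_sub (hcompl' t) a b
  have hPs0 : ∀ t, Ps t 0 = 0 := by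
    intro t; rw [hPs]; exact Pst_zero _ _
  have hPusub : ∀ t a b, Pu t (a - b) = Pu t a - Pu t b := by
    intro t a b; rw [hPu]; simp only [hPssub]; abel
  have hPu0 : ∀ t, Pu t 0 = 0 := by intro t; rw [hPu]; simp [hPs0]
  have hPsnorm : ∀ t v, ‖Ps t v‖ ≤ C * ‖v‖ := by
    intro t v
    have h1 := hproj (y t) (hyΛ t) (Ps t v) (hPsmem t v) (Pu t v) (hPumem t v)
    have h2 : Ps t v + Pu t v = v := by rw [hPu]; exact add_sub_cancel _ _
    rwa [h2] at h1
  have hPunorm : ∀ t v, ‖Pu t v‖ ≤ (C + 1) * ‖v‖ := by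
    intro t v
    rw [hPu]
    calc ‖v - Ps t v‖ ≤ ‖v‖ + ‖Ps t v‖ := norm_sub_le _ _
    _ ≤ ‖v‖ + C * ‖v‖ := by linarith [hPsnorm t v]
    _ = (C + 1) * ‖v‖ := by ring
  -- unstable bijectivity
  have hbijk : ∀ t k, Set.BijOn (Dk t k) ((Eu (y t) : Set E)) ((Eu (y (t+k)) : Set E)) := by
    intro t k
    induction k with
    | zero =>
      rw [hDk0]
      simpa using Set.bijOn_id (Eu (y t) : Set E)
    | succ k ih =>
      have h1 := hbij (y (t+k)) (hyΛ (t+k))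
      rw [← hysucc (t+k)] at h1
      have h2 : A (t+k) = fderiv ℝ F (y (t+k)) := by rw [hA]
      rw [← h2] at h1
      have h3 := h1.comp ih
      rw [chain1 t k, ContinuousLinearMap.coe_comp', ← add_assoc]
      exact h3
  -- inverse of the unstable cocycle
  obtain ⟨ψ, hψ⟩ : ∃ ψ : ℕ → ℕ → E → E,
      ψ = fun t k v => invOn (Dk t k) ((Eu (y t) : Set E)) v := ⟨_, rfl⟩
  have hψmem : ∀ t k v, v ∈ Eu (y (t+k)) → ψ t k v ∈ Eu (y t) := by
    intro t k v hv; rw [hψ]; exact invOn_mem (hbijk t k) hv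
  have hψapp : ∀ t k v, v ∈ Eu (y (t+k)) → Dk t k (ψ t k v) = v := by
    intro t k v hv; rw [hψ]; exact invOn_apply (hbijk t k) hv
  have hψuniq : ∀ t k (u v : E), u ∈ Eu (y t) → Dk t k u = v → ψ t k v = u := by
    intro t k u v hu huv; rw [hψ]; exact invOn_eq (hbijk t k) hu huv
  have hψnorm : ∀ t k v, v ∈ Eu (y (t+k)) → ‖ψ t k v‖ ≤ C * lam ^ k * ‖v‖ := by
    intro t k v hv
    have h1 := hU (y t) (hyΛ t) k (ψ t k v) (hψmem t k v hv)
    have happ := hψapp t k v hv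
    rw [hDk] at happ
    rw [happ] at h1
    have hpos : (0:ℝ) < C * lam ^ k := by positivity
    have h2 : ‖ψ t k v‖ = (C * lam ^ k) * (C⁻¹ * (lam ^ k)⁻¹ * ‖ψ t k v‖) := by
      field_simp
    calc ‖ψ t k v‖ = (C * lam ^ k) * (C⁻¹ * (lam ^ k)⁻¹ * ‖ψ t k v‖) := h2
      _ ≤ (C * lam ^ k) * ‖v‖ := mul_le_mul_of_nonneg_left h1 hpos.le
      _ = C * lam ^ k * ‖v‖ := by ring
  have hψsub : ∀ t k (a b : E), a ∈ Eu (y (t+k)) → b ∈ Eu (y (t+k)) →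
      ψ t k (a - b) = ψ t k a - ψ t k b := by
    intro t k a b ha hb
    refine hψuniq t k _ _ (sub_mem (hψmem t k a ha) (hψmem t k b hb)) ?_
    rw [map_sub, hψapp t k a ha, hψapp t k b hb]
  have hψzero : ∀ t (v : E), v ∈ Eu (y t) → ψ t 0 v = v := by
    intro t v hv
    refine hψuniq t 0 v v hv ?_
    rw [hDk0]; rfl
  have hψ0 : ∀ t k, ψ t k 0 = 0 := by
    intro t k
    exact hψuniq t k 0 0 (zero_mem _) (map_zero _)
  have hψcoc : ∀ t k (v : E), v ∈ Eu (y (t+(k+1))) → A t (ψ t (k+1) v) = ψ (t+1) k v := by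
    intro t k v hv
    have hu := hψmem t (k+1) v hv
    have hmem2 : A t (ψ t (k+1) v) ∈ Eu (y (t+1)) := by
      have h1 := (hbij (y t) (hyΛ t)).mapsTo hu
      rw [← hysucc t] at h1
      rw [hA]
      exact h1
    refine (hψuniq (t+1) k _ v hmem2 ?_).symm
    rw [← ContinuousLinearMap.comp_apply, ← chain2 t k, hψapp t (k+1) v hv]
  -- geometric facts
  have hgeo0 : Summable (fun k : ℕ => lam ^ k) := summable_geometric_of_lt_one hlam0.le hlam1
  have hgeo : Summable (fun k : ℕ => lam ^ (k+1)) := by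
    simp only [pow_succ']
    exact hgeo0.mul_left lam
  have hgeosum : ∑' k : ℕ, lam ^ (k+1) = lam * (1-lam)⁻¹ := by
    simp only [pow_succ']
    rw [tsum_mul_left, tsum_geometric_of_lt_one hlam0.le hlam1]
  have hpartial : ∀ t : ℕ, ∑ j ∈ Finset.range t, lam ^ j ≤ (1-lam)⁻¹ := by
    intro t
    have h2 : ∑ j ∈ Finset.range t, lam ^ j ≤ ∑' j : ℕ, lam ^ j :=
      Summable.sum_le_tsum _ (fun j _ => by positivity) hgeo0
    rwa [tsum_geometric_of_lt_one hlam0.le hlam1] at h2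
  -- the solution operator
  obtain ⟨sol, hsol⟩ : ∃ sol : (ℕ → E) → ℕ → E, sol = fun g t =>
      (∑ s ∈ Finset.range t, Dk (s+1) (t - s - 1) (Ps (s+1) (g s)))
        - ∑' k : ℕ, ψ t (k+1) (Pu (t+k+1) (g (t+k))) := ⟨_, rfl⟩
  have hterm : ∀ t k (a : E), ‖ψ t (k+1) (Pu (t+k+1) a)‖ ≤ C * (C+1) * lam ^ (k+1) * ‖a‖ := by
    intro t k a
    have hm : Pu (t+k+1) a ∈ Eu (y (t+(k+1))) := hPumem (t+k+1) a
    calc ‖ψ t (k+1) (Pu (t+k+1) a)‖ ≤ C * lam ^ (k+1) * ‖Pu (t+k+1) a‖ := hψnorm t (k+1) _ hm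
      _ ≤ C * lam ^ (k+1) * ((C+1) * ‖a‖) := by
          have h1 := hPunorm (t+k+1) a
          have h0 : (0:ℝ) ≤ C * lam ^ (k+1) := by positivity
          exact mul_le_mul_of_nonneg_left h1 h0
      _ = C * (C+1) * lam ^ (k+1) * ‖a‖ := by ring
  have hsummable : ∀ (g : ℕ → E) (M : ℝ), (∀ s, ‖g s‖ ≤ M) → ∀ t,
      Summable (fun k : ℕ => ψ t (k+1) (Pu (t+k+1) (g (t+k)))) := by
    intro g M hg t
    refine Summable.of_norm_bounded (g := fun k => C * (C+1) * M * lam ^ (k+1)) ?_ ?_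
    · have := hgeo.mul_left (C * (C+1) * M)
      simpa [mul_comm, mul_assoc, mul_left_comm] using this
    · intro k
      calc ‖ψ t (k+1) (Pu (t+k+1) (g (t+k)))‖ ≤ C * (C+1) * lam ^ (k+1) * ‖g (t+k)‖ :=
            hterm t k _
        _ ≤ C * (C+1) * lam ^ (k+1) * M := by
            have h0 : (0:ℝ) ≤ C * (C+1) * lam ^ (k+1) := by positivity
            exact mul_le_mul_of_nonneg_left (hg (t+k)) h0
        _ = C * (C+1) * M * lam ^ (k+1) := by ring
  have h1lam : (0:ℝ) < 1 - lam := by linarith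
  have hK0' : K0 = 2 * C * (C+1) * (1-lam)⁻¹ := by rw [hK0]; ring
  have hK0pos : 0 < K0 := by rw [hK0']; positivity
  -- difference bound
  have hsolDiff : ∀ (g g' : ℕ → E) (Mg Mg' M : ℝ), (∀ s, ‖g s‖ ≤ Mg) → (∀ s, ‖g' s‖ ≤ Mg') →
      (∀ s, ‖g s - g' s‖ ≤ M) → ∀ t, ‖sol g t - sol g' t‖ ≤ K0 * M := by
    intro g g' Mg Mg' M hg hg' hM t
    have hM0 : 0 ≤ M := le_trans (norm_nonneg _) (hM 0)
    have hsg := hsummable g Mg hg t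
    have hsg' := hsummable g' Mg' hg' t
    have hsd : Summable (fun k => ψ t (k+1) (Pu (t+k+1) ((fun s => g s - g' s) (t+k)))) :=
      hsummable (fun s => g s - g' s) M hM t
    have e2 : ∀ k : ℕ, ψ t (k+1) (Pu (t+k+1) (g (t+k))) - ψ t (k+1) (Pu (t+k+1) (g' (t+k)))
        = ψ t (k+1) (Pu (t+k+1) (g (t+k) - g' (t+k))) := by
      intro k
      rw [hPusub, hψsub t (k+1) _ _ (hPumem (t+k+1) _) (hPumem (t+k+1) _)]
    have e3 : sol g t - sol g' t =
        (∑ s ∈ Finset.range t, Dk (s+1) (t - s - 1) (Ps (s+1) (g s - g' s)))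
          - ∑' k : ℕ, ψ t (k+1) (Pu (t+k+1) (g (t+k) - g' (t+k))) := by
      simp only [hsol]
      have e4 : ∀ (a b c e : E), (a - b) - (c - e) = (a - c) - (b - e) := by
        intros a b c e; abel
      rw [e4, ← Finset.sum_sub_distrib, ← Summable.tsum_sub hsg hsg']
      congr 1
      · exact Finset.sum_congr rfl (fun s _ => by rw [hPssub, map_sub])
      · exact tsum_congr e2
    rw [e3]
    have hstab_term : ∀ s ∈ Finset.range t,
        ‖Dk (s+1) (t-s-1) (Ps (s+1) (g s - g' s))‖ ≤ C * C * M * lam ^ (t-s-1) := by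
      intro s _
      have h1 := hS (y (s+1)) (hyΛ (s+1)) (t-s-1) (Ps (s+1) (g s - g' s)) (hPsmem _ _)
      have h1' : ‖Dk (s+1) (t-s-1) (Ps (s+1) (g s - g' s))‖
          ≤ C * lam ^ (t-s-1) * ‖Ps (s+1) (g s - g' s)‖ := by rw [hDk]; exact h1
      calc ‖Dk (s+1) (t-s-1) (Ps (s+1) (g s - g' s))‖
          ≤ C * lam ^ (t-s-1) * ‖Ps (s+1) (g s - g' s)‖ := h1'
        _ ≤ C * lam ^ (t-s-1) * (C * M) := by
            have h2 : ‖Ps (s+1) (g s - g' s)‖ ≤ C * M := by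
              calc ‖Ps (s+1) (g s - g' s)‖ ≤ C * ‖g s - g' s‖ := hPsnorm _ _
                _ ≤ C * M := mul_le_mul_of_nonneg_left (hM s) hC0.le
            have h0 : (0:ℝ) ≤ C * lam ^ (t-s-1) := by positivity
            exact mul_le_mul_of_nonneg_left h2 h0
        _ = C * C * M * lam ^ (t-s-1) := by ring
    have hstabsum : ‖∑ s ∈ Finset.range t, Dk (s+1) (t-s-1) (Ps (s+1) (g s - g' s))‖
        ≤ C * C * M * (1-lam)⁻¹ := by
      calc ‖∑ s ∈ Finset.range t, Dk (s+1) (t-s-1) (Ps (s+1) (g s - g' s))‖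
          ≤ ∑ s ∈ Finset.range t, C * C * M * lam ^ (t-s-1) :=
            norm_sum_le_of_le _ hstab_term
        _ = C * C * M * ∑ s ∈ Finset.range t, lam ^ (t-1-s) := by
            rw [Finset.mul_sum]
            exact Finset.sum_congr rfl (fun s _ => by rw [Nat.sub_right_comm])
        _ = C * C * M * ∑ j ∈ Finset.range t, lam ^ j := by
            rw [Finset.sum_range_reflect (fun j => lam ^ j) t]
        _ ≤ C * C * M * (1-lam)⁻¹ := by
            have h0 : (0:ℝ) ≤ C * C * M := by positivity
            exact mul_le_mul_of_nonneg_left (hpartial t) h0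
    have hunstsum : ‖∑' k : ℕ, ψ t (k+1) (Pu (t+k+1) (g (t+k) - g' (t+k)))‖
        ≤ C * (C+1) * M * (lam * (1-lam)⁻¹) := by
      have hnormssum : Summable (fun k : ℕ => C * (C+1) * M * lam ^ (k+1)) := by
        have := hgeo.mul_left (C * (C+1) * M)
        simpa [mul_comm, mul_assoc, mul_left_comm] using this
      have hnorms : Summable (fun k : ℕ => ‖ψ t (k+1) (Pu (t+k+1) (g (t+k) - g' (t+k)))‖) := by
        refine Summable.of_nonneg_of_le (fun _ => norm_nonneg _) (fun k => ?_) hnormssum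
        calc ‖ψ t (k+1) (Pu (t+k+1) (g (t+k) - g' (t+k)))‖
            ≤ C * (C+1) * lam ^ (k+1) * ‖g (t+k) - g' (t+k)‖ := hterm t k _
          _ ≤ C * (C+1) * lam ^ (k+1) * M := by
              have h0 : (0:ℝ) ≤ C * (C+1) * lam ^ (k+1) := by positivity
              exact mul_le_mul_of_nonneg_left (hM (t+k)) h0
          _ = C * (C+1) * M * lam ^ (k+1) := by ring
      calc ‖∑' k : ℕ, ψ t (k+1) (Pu (t+k+1) (g (t+k) - g' (t+k)))‖
          ≤ ∑' k : ℕ, ‖ψ t (k+1) (Pu (t+k+1) (g (t+k) - g' (t+k)))‖ :=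
            norm_tsum_le_tsum_norm hnorms
        _ ≤ ∑' k : ℕ, C * (C+1) * M * lam ^ (k+1) := by
            refine Summable.tsum_le_tsum (fun k => ?_) hnorms hnormssum
            calc ‖ψ t (k+1) (Pu (t+k+1) (g (t+k) - g' (t+k)))‖
                ≤ C * (C+1) * lam ^ (k+1) * ‖g (t+k) - g' (t+k)‖ := hterm t k _
              _ ≤ C * (C+1) * lam ^ (k+1) * M := by
                  have h0 : (0:ℝ) ≤ C * (C+1) * lam ^ (k+1) := by positivity
                  exact mul_le_mul_of_nonneg_left (hM (t+k)) h0
              _ = C * (C+1) * M * lam ^ (k+1) := by ring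
        _ = C * (C+1) * M * (lam * (1-lam)⁻¹) := by
            rw [tsum_mul_left, hgeosum]
    calc ‖(∑ s ∈ Finset.range t, Dk (s+1) (t-s-1) (Ps (s+1) (g s - g' s)))
          - ∑' k : ℕ, ψ t (k+1) (Pu (t+k+1) (g (t+k) - g' (t+k)))‖
        ≤ ‖∑ s ∈ Finset.range t, Dk (s+1) (t-s-1) (Ps (s+1) (g s - g' s))‖
          + ‖∑' k : ℕ, ψ t (k+1) (Pu (t+k+1) (g (t+k) - g' (t+k)))‖ := norm_sub_le _ _
      _ ≤ C * C * M * (1-lam)⁻¹ + C * (C+1) * M * (lam * (1-lam)⁻¹) := by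
          linarith [hstabsum, hunstsum]
      _ ≤ K0 * M := by
          rw [hK0']
          have hinv : (0:ℝ) < (1-lam)⁻¹ := by positivity
          have e5 : 2*C*(C+1)*(1-lam)⁻¹*M = C*(C+1)*M*(1-lam)⁻¹ + C*(C+1)*M*(1-lam)⁻¹ := by
            ring
          have p1 : C*C*M*(1-lam)⁻¹ ≤ C*(C+1)*M*(1-lam)⁻¹ := by
            have h3 : C*C ≤ C*(C+1) := by nlinarith
            exact mul_le_mul_of_nonneg_right (mul_le_mul_of_nonneg_right h3 hM0) hinv.le
          have p2 : C*(C+1)*M*(lam*(1-lam)⁻¹) ≤ C*(C+1)*M*(1-lam)⁻¹ := by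
            have h3 : lam*(1-lam)⁻¹ ≤ (1-lam)⁻¹ := by nlinarith
            have h4 : (0:ℝ) ≤ C*(C+1)*M := by positivity
            exact mul_le_mul_of_nonneg_left h3 h4
          linarith
  have hsol0 : ∀ t, sol (fun _ => (0:E)) t = 0 := by
    intro t
    simp only [hsol]
    have h2 : ∀ k : ℕ, ψ t (k+1) (Pu (t+k+1) (0:E)) = 0 := fun k => by rw [hPu0, hψ0]
    simp [hPs0, h2]
  have hsolBound : ∀ (g : ℕ → E) (M : ℝ), (∀ s, ‖g s‖ ≤ M) → ∀ t, ‖sol g t‖ ≤ K0 * M := by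
    intro g M hg t
    have h1 := hsolDiff g (fun _ => 0) M 0 M hg (fun s => by simp) (fun s => by simpa using hg s) t
    simpa [hsol0] using h1
  have hsolEq : ∀ (g : ℕ → E) (M : ℝ), (∀ s, ‖g s‖ ≤ M) → ∀ t,
      sol g (t+1) = A t (sol g t) + g t := by
    intro g M hg t
    have hsum1 := hsummable g M hg t
    have hsum2 : Summable (fun k => A t (ψ t (k+1) (Pu (t+k+1) (g (t+k))))) :=
      hsum1.map (A t).toLinearMap.toAddMonoidHom (A t).continuous
    have hAt : A t (sol g t) =
        (∑ s ∈ Finset.range t, Dk (s+1) (t - s) (Ps (s+1) (g s)))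
          - ∑' k : ℕ, ψ (t+1) k (Pu (t+k+1) (g (t+k))) := by
      simp only [hsol]
      rw [map_sub, map_sum, (A t).map_tsum hsum1]
      congr 1
      · refine Finset.sum_congr rfl (fun s hs => ?_)
        have hst : s < t := Finset.mem_range.mp hs
        have h1 : t - s = (t - s - 1) + 1 := by omega
        rw [h1, chain1 (s+1) (t-s-1)]
        have h2 : (s+1) + (t-s-1) = t := by omega
        rw [h2]
        rfl
      · exact tsum_congr (fun k => hψcoc t k _ (hPumem (t+k+1) _))
    have hsum3 : Summable (fun k => ψ (t+1) k (Pu (t+k+1) (g (t+k)))) := by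
      have h4 : (fun k => ψ (t+1) k (Pu (t+k+1) (g (t+k)))) =
          fun k => A t (ψ t (k+1) (Pu (t+k+1) (g (t+k)))) := by
        funext k; rw [hψcoc t k _ (hPumem (t+k+1) _)]
      rw [h4]; exact hsum2
    have hsplit : (∑' k : ℕ, ψ (t+1) k (Pu (t+k+1) (g (t+k))))
        = Pu (t+1) (g t) + ∑' k : ℕ, ψ (t+1) (k+1) (Pu ((t+1)+k+1) (g ((t+1)+k))) := by
      rw [Summable.tsum_eq_zero_add hsum3]
      congr 1
      · exact hψzero (t+1) _ (hPumem (t+1) (g t))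
      · refine tsum_congr (fun k => ?_)
        have h5 : t + (k+1) + 1 = (t+1)+k+1 := by omega
        have h6 : t + (k+1) = (t+1)+k := by omega
        rw [h5, h6]
    have hPQ : Ps (t+1) (g t) + Pu (t+1) (g t) = g t := by
      rw [hPu]; exact add_sub_cancel _ _
    have goal1 : sol g (t+1) =
        ((∑ s ∈ Finset.range t, Dk (s+1) (t - s) (Ps (s+1) (g s))) + Ps (t+1) (g t))
          - ∑' k : ℕ, ψ (t+1) (k+1) (Pu ((t+1)+k+1) (g ((t+1)+k))) := by
      simp only [hsol]
      rw [Finset.sum_range_succ]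
      congr 2
      · exact Finset.sum_congr rfl (fun s hs => by
          have h7 : (t+1) - s - 1 = t - s := by omega
          rw [h7])
      · have h8 : (t+1) - t - 1 = 0 := by omega
        rw [h8, hDk0]
        rfl
    calc sol g (t+1)
        = ((∑ s ∈ Finset.range t, Dk (s+1) (t - s) (Ps (s+1) (g s))) + Ps (t+1) (g t))
          - ∑' k : ℕ, ψ (t+1) (k+1) (Pu ((t+1)+k+1) (g ((t+1)+k))) := goal1
      _ = ((∑ s ∈ Finset.range t, Dk (s+1) (t - s) (Ps (s+1) (g s)))
            - (Pu (t+1) (g t) + ∑' k : ℕ, ψ (t+1) (k+1) (Pu ((t+1)+k+1) (g ((t+1)+k)))))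
          + (Ps (t+1) (g t) + Pu (t+1) (g t)) := by abel
      _ = ((∑ s ∈ Finset.range t, Dk (s+1) (t - s) (Ps (s+1) (g s)))
            - (Pu (t+1) (g t) + ∑' k : ℕ, ψ (t+1) (k+1) (Pu ((t+1)+k+1) (g ((t+1)+k)))))
          + g t := by rw [hPQ]
      _ = A t (sol g t) + g t := by rw [hAt, hsplit]
  -- the nonlinear error term
  obtain ⟨ρ, hρ⟩ : ∃ ρ : ℕ → E → E, ρ = fun t w => G (y t + w) - F (y t) - A t w := ⟨_, rfl⟩
  have hρ_lip : ∀ t (w w' : E), ‖w‖ ≤ δ' → ‖w'‖ ≤ δ' →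
      ‖ρ t w - ρ t w'‖ ≤ (ε + K * δ') * ‖w - w'‖ := by
    intro t w w' hw hw'
    have hyU : ∀ z : E, z ∈ closedBall (y t) δ' → z ∈ U := by
      intro z hz
      exact hballU (y t) (hyΛ t) (closedBall_subset_closedBall hδr hz)
    have hdiffH : ∀ z : E, DifferentiableAt ℝ (fun u => G u - A t u) z :=
      fun z => (hGd z).sub ((A t).differentiable.differentiableAt)
    have hfd : ∀ z : E, fderiv ℝ (fun u => G u - A t u) z = fderiv ℝ G z - A t := by
      intro z
      rw [fderiv_fun_sub (hGd z) ((A t).differentiable.differentiableAt)]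
      congr 1
      exact (A t).fderiv
    have hbnd : ∀ z ∈ closedBall (y t) δ',
        ‖fderiv ℝ (fun u => G u - A t u) z‖ ≤ ε + K * δ' := by
      intro z hz
      rw [hfd z]
      have h1 : ‖fderiv ℝ G z - fderiv ℝ F z‖ ≤ ε := by
        linarith [hclose z, norm_nonneg (G z - F z)]
      have h2 : ‖fderiv ℝ F z - A t‖ ≤ (K:ℝ) * δ' := by
        rw [hA]
        have h3 := (lipschitzOnWith_iff_dist_le_mul.mp hlipF) z (hyU z hz)
          (y t) (hyU (y t) (mem_closedBall_self hδ'0.le))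
        rw [dist_eq_norm] at h3
        calc ‖fderiv ℝ F z - (fun t => fderiv ℝ F (y t)) t‖
            ≤ (K:ℝ) * dist z (y t) := h3
          _ ≤ (K:ℝ) * δ' := by
              have := mem_closedBall.mp hz
              exact mul_le_mul_of_nonneg_left this K.2
      calc ‖fderiv ℝ G z - A t‖
          ≤ ‖fderiv ℝ G z - fderiv ℝ F z‖ + ‖fderiv ℝ F z - A t‖ := by
            have h4 : fderiv ℝ G z - A t =
                (fderiv ℝ G z - fderiv ℝ F z) + (fderiv ℝ F z - A t) := by abel
            rw [h4]; exact norm_add_le _ _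
        _ ≤ ε + K * δ' := by linarith
    have hm1 : y t + w ∈ closedBall (y t) δ' := by
      rw [mem_closedBall, dist_eq_norm]
      simpa using hw
    have hm2 : y t + w' ∈ closedBall (y t) δ' := by
      rw [mem_closedBall, dist_eq_norm]
      simpa using hw'
    have hHsub := Convex.norm_image_sub_le_of_norm_fderiv_le
      (fun z _ => hdiffH z) hbnd (convex_closedBall (y t) δ') hm2 hm1
    have e1 : ρ t w - ρ t w' = (fun u => G u - A t u) (y t + w) - (fun u => G u - A t u) (y t + w') := by
      rw [hρ]
      simp only [map_add]
      abel
    have e2 : (y t + w) - (y t + w') = w - w' := by abel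
    rw [e1]
    calc ‖(fun u => G u - A t u) (y t + w) - (fun u => G u - A t u) (y t + w')‖
        ≤ (ε + K * δ') * ‖(y t + w) - (y t + w')‖ := hHsub
      _ = (ε + K * δ') * ‖w - w'‖ := by rw [e2]
  obtain ⟨B0, hB0⟩ : ∃ B0 : ℝ, B0 = ε + (ε + K * δ') * δ' := ⟨_, rfl⟩
  have hρ0 : ∀ t, ‖ρ t 0‖ ≤ ε := by
    intro t
    have e1 : ρ t 0 = G (y t) - F (y t) := by rw [hρ]; simp
    rw [e1]
    linarith [hclose (y t), norm_nonneg (fderiv ℝ G (y t) - fderiv ℝ F (y t))]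
  have hρb : ∀ t (w : E), ‖w‖ ≤ δ' → ‖ρ t w‖ ≤ B0 := by
    intro t w hw
    have h1 := hρ_lip t w 0 hw (by simpa using hδ'0.le)
    have e1 : ρ t w = ρ t 0 + (ρ t w - ρ t 0) := by abel
    calc ‖ρ t w‖ = ‖ρ t 0 + (ρ t w - ρ t 0)‖ := by rw [← e1]
      _ ≤ ‖ρ t 0‖ + ‖ρ t w - ρ t 0‖ := norm_add_le _ _
      _ ≤ ε + (ε + K * δ') * ‖w - 0‖ := by linarith [hρ0 t]
      _ ≤ ε + (ε + K * δ') * δ' := by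
          have h2 : ‖w - (0:E)‖ ≤ δ' := by simpa using hw
          have h3 : (0:ℝ) ≤ ε + K * δ' := by positivity
          linarith [mul_le_mul_of_nonneg_left h2 h3]
      _ = B0 := hB0.symm
  -- fixed point setup
  haveI hcompX : CompleteSpace (closedBall (0 : BoundedContinuousFunction ℕ E) δ') :=
    (Metric.isClosed_closedBall).completeSpace_coe
  haveI : Nonempty (closedBall (0 : BoundedContinuousFunction ℕ E) δ') :=
    ⟨⟨0, mem_closedBall_self hδ'0.le⟩⟩
  have hmemval : ∀ f : closedBall (0 : BoundedContinuousFunction ℕ E) δ',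
      ∀ s, ‖(f : BoundedContinuousFunction ℕ E) s‖ ≤ δ' := by
    intro f s
    have h1 : ‖(f : BoundedContinuousFunction ℕ E)‖ ≤ δ' := by
      have h2 := mem_closedBall.mp f.2
      rwa [dist_zero_right] at h2
    exact le_trans (BoundedContinuousFunction.norm_coe_le_norm _ s) h1
  have hTval : ∀ f : closedBall (0 : BoundedContinuousFunction ℕ E) δ',
      ∀ t, ‖sol (fun s => ρ s ((f : BoundedContinuousFunction ℕ E) s)) t‖ ≤ δ' := by
    intro f t
    have hb : ∀ s, ‖ρ s ((f : BoundedContinuousFunction ℕ E) s)‖ ≤ B0 :=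
      fun s => hρb s _ (hmemval f s)
    have h1 := hsolBound _ B0 hb t
    have h2 : K0 * B0 ≤ δ' := by
      rw [hB0]
      have h3 : K0 * ((ε + K*δ')*δ') ≤ (1/2) * δ' := by
        have h4 := mul_le_mul_of_nonneg_right hcontr hδ'0.le
        calc K0 * ((ε + K*δ')*δ') = (K0 * (ε + K*δ')) * δ' := by ring
          _ ≤ (1/2) * δ' := h4
      calc K0 * (ε + (ε + K*δ')*δ') = K0 * ε + K0*((ε + K*δ')*δ') := by ring
        _ ≤ δ'/2 + (1/2)*δ' := by linarith [hKeps]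
        _ = δ' := by ring
    linarith
  obtain ⟨T, hT⟩ : ∃ T : closedBall (0 : BoundedContinuousFunction ℕ E) δ' →
        closedBall (0 : BoundedContinuousFunction ℕ E) δ',
      ∀ f, (T f : BoundedContinuousFunction ℕ E) =
        BoundedContinuousFunction.ofNormedAddCommGroup
          (fun t => sol (fun s => ρ s ((f : BoundedContinuousFunction ℕ E) s)) t)
          continuous_of_discreteTopology δ' (hTval f) := by
    refine ⟨fun f => ⟨BoundedContinuousFunction.ofNormedAddCommGroup _
      continuous_of_discreteTopology δ' (hTval f), ?_⟩, fun f => rfl⟩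
    rw [mem_closedBall, dist_zero_right]
    refine (BoundedContinuousFunction.norm_le hδ'0.le).mpr (fun t => ?_)
    exact hTval f t
  have hTapp : ∀ f t, (T f : BoundedContinuousFunction ℕ E) t
      = sol (fun s => ρ s ((f : BoundedContinuousFunction ℕ E) s)) t := by
    intro f t
    rw [hT f]
    rfl
  have hεK' : (0:ℝ) ≤ ε + K * δ' := by positivity
  have hTlip : ∀ f f', dist (T f) (T f') ≤ (1/2) * dist f f' := by
    intro f f'
    have hMd : ∀ s, ‖ρ s ((f : BoundedContinuousFunction ℕ E) s)
        - ρ s ((f' : BoundedContinuousFunction ℕ E) s)‖ ≤ (ε + K*δ') * dist f f' := by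
      intro s
      have h1 := hρ_lip s _ _ (hmemval f s) (hmemval f' s)
      have h2 : ‖(f : BoundedContinuousFunction ℕ E) s - (f' : BoundedContinuousFunction ℕ E) s‖
          ≤ dist f f' := by
        rw [← dist_eq_norm]
        calc dist ((f : BoundedContinuousFunction ℕ E) s) ((f' : BoundedContinuousFunction ℕ E) s)
            ≤ dist (f : BoundedContinuousFunction ℕ E) (f' : BoundedContinuousFunction ℕ E) :=
              BoundedContinuousFunction.dist_coe_le_dist s
          _ = dist f f' := (Subtype.dist_eq f f').symm
      calc ‖ρ s ((f : BoundedContinuousFunction ℕ E) s) - ρ s ((f' : BoundedContinuousFunction ℕ E) s)‖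
          ≤ (ε + K*δ') * ‖(f : BoundedContinuousFunction ℕ E) s - (f' : BoundedContinuousFunction ℕ E) s‖ := h1
        _ ≤ (ε + K*δ') * dist f f' := mul_le_mul_of_nonneg_left h2 hεK'
    have hkey : ∀ t, ‖(T f : BoundedContinuousFunction ℕ E) t - (T f' : BoundedContinuousFunction ℕ E) t‖
        ≤ K0 * ((ε + K*δ') * dist f f') := by
      intro t
      rw [hTapp f t, hTapp f' t]
      exact hsolDiff _ _ B0 B0 _ (fun s => hρb s _ (hmemval f s))
        (fun s => hρb s _ (hmemval f' s)) hMd t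
    rw [Subtype.dist_eq]
    have hhalf : (0:ℝ) ≤ (1/2) * dist f f' := by positivity
    refine (BoundedContinuousFunction.dist_le hhalf).mpr (fun t => ?_)
    rw [dist_eq_norm]
    calc ‖(T f : BoundedContinuousFunction ℕ E) t - (T f' : BoundedContinuousFunction ℕ E) t‖
        ≤ K0 * ((ε + K*δ') * dist f f') := hkey t
      _ = (K0 * (ε + K*δ')) * dist f f' := by ring
      _ ≤ (1/2) * dist f f' := mul_le_mul_of_nonneg_right hcontr dist_nonneg
  have hcw : ContractingWith (1/2 : NNReal) T := by
    constructor
    · rw [← NNReal.coe_lt_coe]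
      norm_num
    · refine LipschitzWith.of_dist_le_mul (fun f f' => ?_)
      have hc : ((1/2 : NNReal) : ℝ) = (1/2 : ℝ) := by norm_num
      rw [hc]
      exact hTlip f f'
  obtain ⟨wf, hwf⟩ : ∃ wf : closedBall (0 : BoundedContinuousFunction ℕ E) δ', T wf = wf :=
    ⟨ContractingWith.fixedPoint T hcw, hcw.fixedPoint_isFixedPt⟩
  obtain ⟨w, hw⟩ : ∃ w : ℕ → E, w = fun t => (wf : BoundedContinuousFunction ℕ E) t := ⟨_, rfl⟩
  have hwδ : ∀ t, ‖w t‖ ≤ δ' := by intro t; rw [hw]; exact hmemval wf t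
  have hweq : ∀ t, w t = sol (fun s => ρ s (w s)) t := by
    intro t
    have h1 : (wf : BoundedContinuousFunction ℕ E) t
        = (T wf : BoundedContinuousFunction ℕ E) t := by rw [hwf]
    have h2 : (fun s => ρ s ((wf : BoundedContinuousFunction ℕ E) s)) = fun s => ρ s (w s) := by
      funext s; rw [hw]
    rw [hw]
    show (wf : BoundedContinuousFunction ℕ E) t = _
    rw [h1, hTapp, h2]
  have hgb : ∀ s, ‖ρ s (w s)‖ ≤ B0 := fun s => hρb s _ (hwδ s)
  have hwrec : ∀ t, w (t+1) = A t (w t) + ρ t (w t) := by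
    intro t
    rw [hweq (t+1), hsolEq _ B0 hgb t, ← hweq t]
  refine ⟨x + w 0, ?_, ?_⟩
  · simpa using hwδ 0
  · have horb : ∀ t, G^[t] (x + w 0) = y t + w t := by
      intro t
      induction t with
      | zero => simp [hy0]
      | succ t ih =>
        rw [Function.iterate_succ_apply', ih]
        have hGv : G (y t + w t) = F (y t) + (A t (w t) + ρ t (w t)) := by
          simp only [hρ]
          abel
        rw [hGv, ← hwrec t, ← hysucc t]
    intro t
    rw [horb t]
    have e1 : y t + w t - F^[t] x = w t := by
      simp only [hy]
      abel
    rw [e1]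
    exact hwδ t






end Key

/-- A C¹ map `F` is uniformly hyperbolic on a compact invariant set `Λ`:
there exist `C ≥ 1`, `λ ∈ (0,1)` and stable/unstable subspaces at each point of `Λ`
satisfying invariance of the splitting, a bound `C` on the stable projection,
and uniform exponential contraction/expansion under the differentials of iterates. -/
def IsUniformlyHyperbolicOn {d : ℕ}
    (F : EuclideanSpace ℝ (Fin d) → EuclideanSpace ℝ (Fin d))
    (Λ : Set (EuclideanSpace ℝ (Fin d))) : Prop :=
  ∃ (C lam : ℝ)
    (Es Eu : EuclideanSpace ℝ (Fin d) → Submodule ℝ (EuclideanSpace ℝ (Fin d))),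
    1 ≤ C ∧ 0 < lam ∧ lam < 1 ∧
    (∀ x ∈ Λ, IsCompl (Es x) (Eu x)) ∧
    (∀ x ∈ Λ, ∀ v ∈ Es x, fderiv ℝ F x v ∈ Es (F x)) ∧
    (∀ x ∈ Λ, Set.BijOn (fderiv ℝ F x) (Eu x : Set (EuclideanSpace ℝ (Fin d)))
      (Eu (F x) : Set (EuclideanSpace ℝ (Fin d)))) ∧
    (∀ x ∈ Λ, ∀ vs ∈ Es x, ∀ vu ∈ Eu x, ‖vs‖ ≤ C * ‖vs + vu‖) ∧
    (∀ x ∈ Λ, ∀ t : ℕ, ∀ v ∈ Es x, ‖fderiv ℝ (F^[t]) x v‖ ≤ C * lam ^ t * ‖v‖) ∧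
    (∀ x ∈ Λ, ∀ t : ℕ, ∀ v ∈ Eu x, C⁻¹ * (lam ^ t)⁻¹ * ‖v‖ ≤ ‖fderiv ℝ (F^[t]) x v‖)


/-- Shadowing property for C¹-close maps of a uniformly hyperbolic map. -/
theorem shadowing_for_C1_close_maps {d : ℕ}
    (F : EuclideanSpace ℝ (Fin d) → EuclideanSpace ℝ (Fin d))
    (Λ : Set (EuclideanSpace ℝ (Fin d)))
    (hΛc : IsCompact Λ) (hFΛ : F '' Λ = Λ)
    (hF : ContDiff ℝ 1 F)
    (hhyp : IsUniformlyHyperbolicOn F Λ)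
    (hlip : ∃ (K : NNReal) (U : Set (EuclideanSpace ℝ (Fin d))),
      IsOpen U ∧ Λ ⊆ U ∧ LipschitzOnWith K (fderiv ℝ F) U) :
    ∀ δ > (0 : ℝ), ∃ ε > (0 : ℝ),
      ∀ G : EuclideanSpace ℝ (Fin d) → EuclideanSpace ℝ (Fin d), ContDiff ℝ 1 G →
        (∀ x, ‖G x - F x‖ + ‖fderiv ℝ G x - fderiv ℝ F x‖ ≤ ε) →
        ∃ τ : EuclideanSpace ℝ (Fin d) → EuclideanSpace ℝ (Fin d),
          (∀ x ∈ Λ, ‖τ x - x‖ ≤ δ) ∧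
          (∀ x ∈ Λ, ∀ t : ℕ, ‖G^[t] (τ x) - F^[t] x‖ ≤ δ) := by
  intro δ hδ
  obtain ⟨C, lam, Es, Eu, hC, hlam0, hlam1, hcompl, hstab, hbij, hproj, hS, hU⟩ := hhyp
  obtain ⟨K, U, hUopen, hΛU, hlipF⟩ := hlip
  obtain ⟨r0, hr0, hthick⟩ := hΛc.exists_thickening_subset_open hUopen hΛU
  have hballU : ∀ m ∈ Λ, closedBall m (r0/2) ⊆ U := by
    intro m hm z hz
    apply hthick
    rw [Metric.mem_thickening_iff]
    exact ⟨m, hm, lt_of_le_of_lt (mem_closedBall.mp hz) (by linarith)⟩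
  have h1lam : (0:ℝ) < 1 - lam := by linarith
  have hC0 : (0:ℝ) < C := lt_of_lt_of_le one_pos hC
  obtain ⟨K0, hK0⟩ : ∃ K0 : ℝ, K0 = 2*C*(C+1)/(1-lam) := ⟨_, rfl⟩
  have hK0pos : 0 < K0 := by rw [hK0]; positivity
  have hKK : (0:ℝ) ≤ (K:ℝ) := K.2
  obtain ⟨δ', hδ'def⟩ : ∃ δ' : ℝ,
      δ' = min δ (min (r0/2) (1/(4*K0*((K:ℝ)+1)))) := ⟨_, rfl⟩
  have hδ'0 : 0 < δ' := by
    rw [hδ'def]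
    refine lt_min hδ (lt_min (by linarith) (by positivity))
  obtain ⟨ε, hεdef⟩ : ∃ ε : ℝ, ε = min (δ'/(2*K0)) (1/(4*K0)) := ⟨_, rfl⟩
  have hε0 : 0 < ε := by
    rw [hεdef]
    exact lt_min (by positivity) (by positivity)
  refine ⟨ε, hε0, ?_⟩
  intro G hG hclose
  have hδ'δ : δ' ≤ δ := by rw [hδ'def]; exact min_le_left _ _
  have hδ'r : δ' ≤ r0/2 := by
    rw [hδ'def]; exact le_trans (min_le_right _ _) (min_le_left _ _)
  have hδ'K : δ' ≤ 1/(4*K0*((K:ℝ)+1)) := by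
    rw [hδ'def]; exact le_trans (min_le_right _ _) (min_le_right _ _)
  have hε1 : ε ≤ δ'/(2*K0) := by rw [hεdef]; exact min_le_left _ _
  have hε2 : ε ≤ 1/(4*K0) := by rw [hεdef]; exact min_le_right _ _
  have hKeps : K0 * ε ≤ δ'/2 := by
    calc K0 * ε ≤ K0 * (δ'/(2*K0)) := mul_le_mul_of_nonneg_left hε1 hK0pos.le
      _ = δ'/2 := by field_simp
  have hcontr : K0 * (ε + (K:ℝ)*δ') ≤ 1/2 := by
    have p1 : K0 * ε ≤ 1/4 := by
      calc K0 * ε ≤ K0 * (1/(4*K0)) := mul_le_mul_of_nonneg_left hε2 hK0pos.le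
        _ = 1/4 := by field_simp
    have p2 : K0 * ((K:ℝ)*δ') ≤ 1/4 := by
      have q1 : (K:ℝ)*δ' ≤ ((K:ℝ)+1)*(1/(4*K0*((K:ℝ)+1))) := by
        calc (K:ℝ)*δ' ≤ ((K:ℝ)+1)*δ' :=
              mul_le_mul_of_nonneg_right (by linarith) hδ'0.le
          _ ≤ ((K:ℝ)+1)*(1/(4*K0*((K:ℝ)+1))) :=
              mul_le_mul_of_nonneg_left hδ'K (by linarith)
      calc K0 * ((K:ℝ)*δ') ≤ K0 * (((K:ℝ)+1)*(1/(4*K0*((K:ℝ)+1)))) :=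
            mul_le_mul_of_nonneg_left q1 hK0pos.le
        _ = 1/4 := by
            field_simp
    calc K0*(ε + (K:ℝ)*δ') = K0*ε + K0*((K:ℝ)*δ') := by ring
      _ ≤ 1/4 + 1/4 := by linarith
      _ = 1/2 := by norm_num
  have hkey : ∀ x ∈ Λ, ∃ z : EuclideanSpace ℝ (Fin d),
      ‖z - x‖ ≤ δ' ∧ ∀ t : ℕ, ‖G^[t] z - F^[t] x‖ ≤ δ' := fun x hx =>
    key_shadow F G Λ hFΛ hF hG C lam Es Eu hC hlam0 hlam1 hcompl hbij hproj hS hU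
      K U hlipF (r0/2) (by linarith) hballU ε δ' hε0 hδ'0 hδ'r K0 hK0 hcontr hKeps hclose x hx
  choose! τ hτ1 hτ2 using hkey
  exact ⟨τ, fun x hx => le_trans (hτ1 x hx) hδ'δ, fun x hx t => le_trans (hτ2 x hx t) hδ'δ⟩
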